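/- Let H be a numerical semigroup with PF(H) = {f_1 < f_2 < ⋯ < f_{t−1} < f_t = F(H)} where t = t(H). Then H is almost symmetric if and only if f_i + f_{t−i} = F(H) for all i ∈ {1, …, t−1}. -/

import Mathlib

/-- A numerical semigroup, viewed as a set of integers: a set of nonnegative
integers containing 0, closed under addition, with finite complement in ℕ. -/
def IsNumericalSemigroup (S : Set ℤ) : Prop :=
  (∀ x ∈ S, 0 ≤ x) ∧ 0 ∈ S ∧ (∀ a ∈ S, ∀ b ∈ S, a + b ∈ S) ∧
    {z : ℤ | 0 ≤ z ∧ z ∉ S}.Finite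

/-- The genus: the number of nonnegative integers not in `S`. -/
noncomputable def genus (S : Set ℤ) : ℕ := {z : ℤ | 0 ≤ z ∧ z ∉ S}.ncard

/-- The Frobenius number: the largest integer not in `S`. -/
noncomputable def frob (S : Set ℤ) : ℤ := sSup {z : ℤ | z ∉ S}

/-- The set of pseudo-Frobenius numbers. -/
def PF (S : Set ℤ) : Set ℤ := {x : ℤ | x ∉ S ∧ ∀ h ∈ S, h ≠ 0 → x + h ∈ S}

/-- The type: the number of pseudo-Frobenius numbers. -/
noncomputable def typ (S : Set ℤ) : ℕ := (PF S).ncard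

/-- The multiplicity: the smallest nonzero element of `S`. -/
noncomputable def mult (S : Set ℤ) : ℤ := sInf {z : ℤ | z ∈ S ∧ z ≠ 0}

/-- The Apéry set of `S` with respect to `n`. -/
def apery (S : Set ℤ) (n : ℤ) : Set ℤ := {s ∈ S | s - n ∉ S}

/-- The dual `H* = M - M` of the maximal ideal `M = S \ {0}`. -/
def dual (S : Set ℤ) : Set ℤ :=
  {z : ℤ | ∀ m ∈ S, m ≠ 0 → z + m ∈ S ∧ z + m ≠ 0}

/-- Almost symmetric: `2 g(S) = F(S) + t(S)`. -/
def AlmostSymmetric (S : Set ℤ) : Prop := 2 * (genus S : ℤ) = frob S + (typ S : ℤ)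

/-- Symmetric: `2 g(S) = F(S) + 1`. -/
def SymmetricNS (S : Set ℤ) : Prop := 2 * (genus S : ℤ) = frob S + 1

/-- Pseudo-symmetric: `2 g(S) = F(S) + 2`. -/
def PseudoSymmetric (S : Set ℤ) : Prop := 2 * (genus S : ℤ) = frob S + 2

/-- The set of minimal generators of `S`: nonzero elements not expressible as the
sum of two nonzero elements of `S`. -/
def minGens (S : Set ℤ) : Set ℤ :=
  {x ∈ S | x ≠ 0 ∧ ∀ a ∈ S, ∀ b ∈ S, a ≠ 0 → b ≠ 0 → x ≠ a + b}

/-- The embedding dimension: the number of minimal generators. -/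
noncomputable def embdim (S : Set ℤ) : ℕ := (minGens S).ncard

/-- The gluing `⟨x S₁, y S₂⟩` of two numerical semigroups. -/
def glue (x y : ℤ) (S₁ S₂ : Set ℤ) : Set ℤ :=
  {z : ℤ | ∃ a ∈ S₁, ∃ b ∈ S₂, z = x * a + y * b}

lemma antitone_index_eq (m : ℕ) (ι : ℕ → ℕ) (hlt : ∀ i, i < m → ι i < m)
    (hanti : ∀ i j, i < j → j < m → ι j < ι i) :
    ∀ i, i < m → ι i = m - 1 - i := by
  have hub : ∀ i, i < m → ι i ≤ m - 1 - i := by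
    intro i
    induction i with
    | zero => intro hi; have := hlt 0 hi; omega
    | succ n ih =>
      intro hi
      have h1 := hanti n (n+1) (by omega) hi
      have h2 := ih (by omega)
      omega
  have hlb : ∀ d i, i < m → m - 1 - i = d → m - 1 - i ≤ ι i := by
    intro d
    induction d with
    | zero => intro i hi hd; omega
    | succ n ih =>
      intro i hi hd
      have hi1 : i + 1 < m := by omega
      have h1 := hanti i (i+1) (by omega) hi1
      have h2 := ih (i+1) hi1 (by omega)
      omega
  intro i hi
  have := hub i hi
  have := hlb (m - 1 - i) i hi rfl
  omega

section facts
variable {S : Set ℤ}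

lemma frob_facts (hS : IsNumericalSemigroup S) :
    frob S ∉ S ∧ ∀ z : ℤ, z ∉ S → z ≤ frob S := by
  obtain ⟨hnn, h0, hadd, hfin⟩ := hS
  have hbdd : ∃ b : ℤ, ∀ z : ℤ, z ∉ S → z ≤ b := by
    obtain ⟨B, hB⟩ := hfin.bddAbove
    refine ⟨max B 0, fun z hz => ?_⟩
    rcases le_or_gt 0 z with h | h
    · exact le_max_of_le_left (hB ⟨h, hz⟩)
    · exact le_max_of_le_right h.le
  have hinh : ∃ z : ℤ, z ∉ S := ⟨-1, fun h => by linarith [hnn _ h]⟩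
  obtain ⟨F, hFm, hmax⟩ := Int.exists_greatest_of_bdd hbdd hinh
  have : frob S = F := IsGreatest.csSup_eq ⟨hFm, fun z hz => hmax z hz⟩
  rw [this]; exact ⟨hFm, hmax⟩

/-- For any gap x there is a pseudo-Frobenius number p with p - x ∈ S. -/
lemma exists_pf_sub_mem (hS : IsNumericalSemigroup S) {x : ℤ} (hx : x ∉ S) :
    ∃ p ∈ PF S, p - x ∈ S := by
  obtain ⟨hnn, h0, hadd, hfin⟩ := hS
  obtain ⟨hFm, hFmax⟩ := frob_facts ⟨hnn, h0, hadd, hfin⟩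
  have hbdd : ∃ b : ℤ, ∀ z : ℤ, (z ∉ S ∧ z - x ∈ S) → z ≤ b :=
    ⟨frob S, fun z hz => hFmax z hz.1⟩
  have hinh : ∃ z : ℤ, z ∉ S ∧ z - x ∈ S := ⟨x, hx, by simpa using h0⟩
  obtain ⟨y, ⟨hy1, hy2⟩, hymax⟩ := Int.exists_greatest_of_bdd hbdd hinh
  refine ⟨y, ⟨hy1, fun h hh hh0 => ?_⟩, hy2⟩
  by_contra hyh
  have hle : y + h ≤ y :=
    hymax (y + h) ⟨hyh, by have := hadd _ hy2 _ hh; convert this using 1; ring⟩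
  have : 0 < h := lt_of_le_of_ne (hnn _ hh) (Ne.symm hh0)
  omega

end facts

theorem stmt3 (S : Set ℤ) (hS : IsNumericalSemigroup S)
    (f : Fin (typ S) → ℤ) (hf : StrictMono f) (hrange : Set.range f = PF S) :
    AlmostSymmetric S ↔
      ∀ i j : Fin (typ S), (i : ℕ) + (j : ℕ) + 2 = typ S → f i + f j = frob S := by
  obtain ⟨hF, hFmax⟩ := frob_facts hS
  obtain ⟨hnn, h0, hadd, hfin⟩ := hS
  set F := frob S with hFdef
  have hgtF : ∀ z : ℤ, F < z → z ∈ S := fun z hz => by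
    by_contra hc; exact absurd (hFmax z hc) (by omega)
  have hFneg1 : -1 ≤ F := hFmax (-1) (fun hc => by linarith [hnn _ hc])
  have hFPF : F ∈ PF S := by
    refine ⟨hF, fun h hh hh0 => hgtF _ ?_⟩
    have : 0 < h := lt_of_le_of_ne (hnn _ hh) (Ne.symm hh0)
    omega
  have hmemPF : ∀ k : Fin (typ S), f k ∈ PF S := fun k => by
    rw [← hrange]; exact ⟨k, rfl⟩
  have hPFrange : ∀ p ∈ PF S, ∃ k : Fin (typ S), f k = p := fun p hp => by
    rw [← hrange] at hp; exact hp
  have hPFne0 : ∀ p ∈ PF S, p ≠ 0 := fun p hp hc => hp.1 (hc ▸ h0)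
  -- t ≥ 1 and the last index
  obtain ⟨k0, hk0⟩ := hPFrange F hFPF
  have htpos : 0 < typ S := k0.pos
  obtain ⟨last, hlastval, hflast⟩ :
      ∃ la : Fin (typ S), la.val = typ S - 1 ∧ f la = F := by
    refine ⟨⟨typ S - 1, by omega⟩, rfl, ?_⟩
    have h1 : f k0 ≤ f ⟨typ S - 1, by omega⟩ := by
      apply hf.monotone
      rw [Fin.le_def]
      exact (by have := k0.isLt; omega : k0.val ≤ typ S - 1)
    have h2 : f ⟨typ S - 1, by omega⟩ ≤ F := hFmax _ (hmemPF _).1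
    omega
  -- the set L of gaps x with F - x also a gap
  set L : Set ℤ := {x : ℤ | x ∉ S ∧ F - x ∉ S} with hLdef
  have hLnonneg : ∀ x ∈ L, 0 ≤ x ∧ x ≤ F := fun x hx =>
    ⟨by have := hFmax _ hx.2; omega, hFmax _ hx.1⟩
  have hPF'L : ∀ p ∈ PF S, p ≠ F → p ∈ L ∧ F - p ∈ L := by
    intro p hp hpF
    have h1 : F - p ∉ S := by
      intro hin
      have hne : F - p ≠ 0 := by omega
      have := hp.2 _ hin hne
      simp only [add_sub_cancel] at this
      exact hF this
    exact ⟨⟨hp.1, h1⟩, ⟨h1, by simpa using hp.1⟩⟩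
  -- counting
  set G : Set ℤ := {z : ℤ | 0 ≤ z ∧ z ∉ S} with hGdef
  have hLG : L ⊆ G := fun x hx => ⟨(hLnonneg x hx).1, hx.1⟩
  have hLfin : L.Finite := hfin.subset hLG
  set N : Set ℤ := S ∩ Set.Icc 0 F with hNdef
  have hNfin : N.Finite := Set.Finite.inter_of_right (Set.finite_Icc 0 F) S
  have hIcc : Set.Icc (0:ℤ) F = N ∪ G := by
    ext z
    constructor
    · intro hz
      have hz' := Set.mem_Icc.mp hz
      by_cases hzS : z ∈ S
      · exact Or.inl ⟨hzS, hz⟩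
      · exact Or.inr ⟨hz'.1, hzS⟩
    · rintro (⟨h1, h2⟩ | ⟨h1, h2⟩)
      · exact h2
      · exact Set.mem_Icc.mpr ⟨h1, hFmax _ h2⟩
  have hIccCard : (Set.Icc (0:ℤ) F).ncard = (F + 1).toNat := by
    rw [← Finset.coe_Icc, Set.ncard_coe_finset, Int.card_Icc]
    congr 1; ring
  have hNG : N.ncard + G.ncard = (F + 1).toNat := by
    rw [← Set.ncard_union_eq (by
        rw [Set.disjoint_left]; intro a ha hb; exact hb.2 ha.1) hNfin hfin, ← hIcc, hIccCard]
  have hGsplit : G = (fun y => F - y) '' N ∪ L := by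
    ext z
    constructor
    · intro hz
      by_cases hzS : F - z ∈ S
      · refine Or.inl ⟨F - z, ⟨hzS, Set.mem_Icc.mpr ⟨?_, ?_⟩⟩, by ring⟩
        · have := hFmax _ hz.2; omega
        · have := hz.1; omega
      · exact Or.inr ⟨hz.2, hzS⟩
    · rintro (⟨y, ⟨hy1, hy2⟩, rfl⟩ | hz)
      · have hy2' := Set.mem_Icc.mp hy2
        show 0 ≤ F - y ∧ F - y ∉ S
        refine ⟨by omega, fun hin => hF ?_⟩
        have := hadd _ hy1 _ hin
        convert this using 1; ring
      · exact hLG hz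
  have hdisj2 : Disjoint ((fun y => F - y) '' N) L := by
    rw [Set.disjoint_left]
    rintro a ⟨y, ⟨hy1, _⟩, rfl⟩ hb
    exact hb.2 (by simpa using hy1)
  have hGcard : G.ncard = N.ncard + L.ncard := by
    rw [hGsplit, Set.ncard_union_eq hdisj2 (hNfin.image _) hLfin,
      Set.ncard_image_of_injective _ (fun a b hab => by simpa using hab)]
  have hgen : 2 * (genus S : ℤ) = F + 1 + L.ncard := by
    have hG : genus S = G.ncard := rfl
    have : ((F + 1).toNat : ℤ) = F + 1 := Int.toNat_of_nonneg (by omega)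
    omega
  -- PF cardinalities
  have hPFfin : (PF S).Finite := by rw [← hrange]; exact Set.finite_range f
  have hPF'sub : PF S \ {F} ⊆ L := fun p hp =>
    (hPF'L p hp.1 (by simpa using hp.2)).1
  have hPF'card : (PF S \ {F}).ncard = typ S - 1 := by
    rw [Set.ncard_diff_singleton_of_mem hFPF]
    rfl
  constructor
  · -- forward direction
    intro hAS i j hij
    have hAS' : 2 * (genus S : ℤ) = F + (typ S : ℤ) := hAS
    have hLcard : L.ncard = typ S - 1 := by omega
    have hLeq : PF S \ {F} = L :=
      Set.eq_of_subset_of_ncard_le hPF'sub (by rw [hLcard, hPF'card]) hLfin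
    set m := typ S - 1 with hmdef
    have hex : ∀ a : Fin (typ S), ∃ k : Fin (typ S),
        a.val < m → (f k = F - f a ∧ k.val < m) := by
      intro a
      by_cases ha : a.val < m
      · have hfaF : f a ≠ F := by
          have : f a < f last := hf (by rw [Fin.lt_def]; omega)
          omega
        have h1 : F - f a ∈ L := (hPF'L (f a) (hmemPF a) hfaF).2
        rw [← hLeq] at h1
        obtain ⟨k, hk⟩ := hPFrange _ h1.1
        refine ⟨k, fun _ => ⟨hk, ?_⟩⟩
        by_contra hc
        have hkeq : k = last := Fin.ext (by have := k.isLt; omega)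
        rw [hkeq, hflast] at hk
        have := hPFne0 _ (hmemPF a)
        omega
      · exact ⟨a, fun hc => absurd hc ha⟩
    choose K hK using hex
    set ι : ℕ → ℕ := fun n => if h : n < m then (K ⟨n, by omega⟩).val else 0 with hιdef
    have hιlt : ∀ n, n < m → ι n < m := by
      intro n hn
      simp only [hιdef, dif_pos hn]
      exact (hK ⟨n, by omega⟩ hn).2
    have hιanti : ∀ a b, a < b → b < m → ι b < ι a := by
      intro a b hab hb
      have ha : a < m := by omega
      simp only [hιdef, dif_pos ha, dif_pos hb]
      have h1 := (hK ⟨a, by omega⟩ ha).1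
      have h2 := (hK ⟨b, by omega⟩ hb).1
      have hfab : f ⟨a, by omega⟩ < f ⟨b, by omega⟩ := hf (by rw [Fin.lt_def]; exact hab)
      have hlt : f (K ⟨b, by omega⟩) < f (K ⟨a, by omega⟩) := by omega
      exact hf.lt_iff_lt.mp hlt
    have him : i.val < m := by omega
    have hval := antitone_index_eq m ι hιlt hιanti i.val him
    have hKieq : ι i.val = (K i).val := by
      simp only [hιdef, dif_pos him, Fin.eta]
    have hKi := (hK i him).1
    have hjK : j = K i := Fin.ext (by omega)
    rw [hjK]
    omega
  · -- backward direction
    intro h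
    have hLsub : L ⊆ PF S \ {F} := by
      intro x hx
      obtain ⟨p, hp, hps⟩ := exists_pf_sub_mem ⟨hnn, h0, hadd, hfin⟩ hx.1
      obtain ⟨k, hk⟩ := hPFrange p hp
      subst hk
      have hklt : k.val < typ S - 1 := by
        by_contra hc
        have hkeq : k = last := Fin.ext (by have := k.isLt; omega)
        rw [hkeq, hflast] at hps
        exact hx.2 hps
      obtain ⟨q, hq, hqs⟩ := exists_pf_sub_mem ⟨hnn, h0, hadd, hfin⟩ hx.2
      obtain ⟨l, hl⟩ := hPFrange q hq
      subst hl
      have hllt : l.val < typ S - 1 := by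
        by_contra hc
        have hleq : l = last := Fin.ext (by have := l.isLt; omega)
        rw [hleq, hflast] at hqs
        exact hx.1 (by simpa using hqs)
      have hj2 : typ S - 2 - l.val < typ S := by omega
      have hsum := h l ⟨typ S - 2 - l.val, hj2⟩
        (by show l.val + (typ S - 2 - l.val) + 2 = typ S; omega)
      have hss : (f k - x) + (f l - (F - x)) ∈ S := hadd _ hps _ hqs
      have hz : (f k - x) + (f l - (F - x)) = 0 := by
        by_contra hne
        have hmem := (hmemPF ⟨typ S - 2 - l.val, hj2⟩).2 _ hss hne
        have h2 : f ⟨typ S - 2 - l.val, hj2⟩ + ((f k - x) + (f l - (F - x))) = f k := by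
          omega
        rw [h2] at hmem
        exact (hmemPF k).1 hmem
      have hx1 : 0 ≤ f k - x := hnn _ hps
      have hx2 : 0 ≤ f l - (F - x) := hnn _ hqs
      have hxp : x = f k := by omega
      refine ⟨by rw [hxp]; exact hp, ?_⟩
      simp only [Set.mem_singleton_iff]
      intro hxF
      exact hx.2 (by rw [show F - x = (0:ℤ) by omega]; exact h0)
    have hLeq : L = PF S \ {F} := Set.Subset.antisymm hLsub hPF'sub
    show 2 * (genus S : ℤ) = F + (typ S : ℤ)
    rw [hLeq, hPF'card] at hgen
    omega
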